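/- arXiv:1608.04315 — 2 statements merged into one kernel-verified Lean document; each statement's English description precedes it below -/
import Mathlib

section
/- For every nonnegative integer m, setting a = -1/3 - m (so 3a+1 = -3m and 3a = -1-3m), the terminating hypergeometric sum satisfies ∑_{n=0}^{3m} [(a)_n (3a+1)_n / ((3a)_n · n!)] · (3/2)^n = (-3)^{3m} (1/3)_m (5/3)_{2m} / (2^{3m} (2)_{3m}). -/
open Finset Polynomial

lemma poch_succ_left_eval (n : ℕ) (x : ℚ) :
    (ascPochhammer ℚ (n+1)).eval x = x * (ascPochhammer ℚ n).eval (x+1) := by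
  rw [ascPochhammer_succ_left, eval_mul, eval_X, eval_comp, eval_add, eval_X, eval_one]

lemma poch_shift (n : ℕ) (x : ℚ) :
    x * (ascPochhammer ℚ n).eval (x+1) = (ascPochhammer ℚ n).eval x * (x + n) := by
  rw [← poch_succ_left_eval, ascPochhammer_succ_eval]

lemma poch_ne_zero (n : ℕ) (x : ℚ) (h : ∀ i : ℕ, i < n → x + i ≠ 0) :
    (ascPochhammer ℚ n).eval x ≠ 0 := by
  induction n with
  | zero => simp
  | succ k ih =>
    rw [ascPochhammer_succ_eval]
    exact mul_ne_zero (ih fun i hi => h i (hi.trans (Nat.lt_succ_self k)))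
      (h k (Nat.lt_succ_self k))

lemma poch_two (k : ℕ) : (ascPochhammer ℚ k).eval 2 = ((k+1).factorial : ℚ) := by
  induction k with
  | zero => simp
  | succ n ih =>
    rw [ascPochhammer_succ_eval, ih, Nat.factorial_succ (n+1)]
    push_cast; ring

lemma poch_key (m : ℕ) :
    (ascPochhammer ℚ (3*m+1)).eval (-1/3 - (m:ℚ))
      = (-1)^(m+1) * (ascPochhammer ℚ m).eval (1/3)
        * (ascPochhammer ℚ (2*m)).eval (5/3) / 3 := by
  induction m with
  | zero => norm_num
  | succ k ih =>
    have h1 : 3*(k+1)+1 = (3*k+3)+1 := by ring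
    have h2 : (-1/3 - ((k:ℚ)+1)) = (-1/3 - k) - 1 := by ring
    have e1 : (ascPochhammer ℚ (3*(k+1)+1)).eval (-1/3 - (((k+1):ℕ):ℚ))
        = ((-1/3 - (k:ℚ)) - 1) * (ascPochhammer ℚ (3*k+3)).eval (-1/3 - (k:ℚ)) := by
      rw [h1]
      push_cast
      rw [h2]
      rw [show ((3:ℕ)*k+3)+1 = ((3*k+3)+1 : ℕ) from rfl, poch_succ_left_eval]
      ring_nf
    rw [e1]
    rw [show 3*k+3 = (3*k+1)+1+1 from by ring, ascPochhammer_succ_eval,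
      ascPochhammer_succ_eval, ih]
    rw [show 2*(k+1) = (2*k)+1+1 from by ring, ascPochhammer_succ_eval,
      ascPochhammer_succ_eval]
    rw [show (k:ℕ)+1 = k+1 from rfl, ascPochhammer_succ_eval]
    rw [pow_succ]
    push_cast
    ring

lemma alg_final (s P Q c F T2 T3 : ℚ) (hc : c ≠ 0) (hF : F ≠ 0) (hT2 : T2 ≠ 0) :
    2 * c * (s * -1 * P * Q / 3) * (T3 * 3 / (T2 * 2)) / F / -c
      = s * T3 * P * Q / (T2 * F) := by
  field_simp

/-- Formula (1,3,3-3)(i), case `a = -1/3-m`: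
`₂F₁(a, 3a+1; 3a; 3/2) = (-3)^{3m} (1/3)_m (5/3)_{2m} / (2^{3m} (2)_{3m})`. -/
theorem case1_third (m : ℕ) :
    ∑ n ∈ Finset.range (3 * m + 1),
      ((ascPochhammer ℚ n).eval (-1/3 - (m : ℚ)) *
        (ascPochhammer ℚ n).eval (3 * (-1/3 - (m : ℚ)) + 1) /
        ((ascPochhammer ℚ n).eval (3 * (-1/3 - (m : ℚ))) * (n.factorial : ℚ))) * (3 / 2 : ℚ) ^ n
    = (-3 : ℚ) ^ (3 * m) * (ascPochhammer ℚ m).eval (1/3 : ℚ) *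
        (ascPochhammer ℚ (2 * m)).eval (5/3 : ℚ) /
        ((2 : ℚ) ^ (3 * m) * (ascPochhammer ℚ (3 * m)).eval (2 : ℚ)) := by
  set a : ℚ := -1/3 - m with ha
  have hb : 3 * a = -(3*(m:ℚ)+1) := by rw [ha]; ring
  set b : ℚ := -(3*(m:ℚ)+1) with hbdef
  have hbne : b ≠ 0 := by
    rw [hbdef]
    have : (0:ℚ) < 3*(m:ℚ)+1 := by positivity
    linarith
  -- telescoping function
  set g : ℕ → ℚ := fun n => 2 * n * (ascPochhammer ℚ n).eval a * (3/2)^n / n.factorial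
    with hg
  have hterm : ∀ n ∈ Finset.range (3*m+1),
      ((ascPochhammer ℚ n).eval a *
        (ascPochhammer ℚ n).eval (3 * a + 1) /
        ((ascPochhammer ℚ n).eval (3 * a) * (n.factorial : ℚ))) * (3 / 2 : ℚ) ^ n
      = (g (n+1) - g n) / b := by
    intro n hn
    rw [Finset.mem_range] at hn
    have hCne : (ascPochhammer ℚ n).eval b ≠ 0 := by
      apply poch_ne_zero
      intro i hi
      have hi' : (i:ℚ) < 3*m+1 := by exact_mod_cast hi.trans hn
      rw [hbdef]; intro h; nlinarith
    have hB : (ascPochhammer ℚ n).eval (b + 1)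
        = (ascPochhammer ℚ n).eval b * (b + n) / b := by
      rw [← poch_shift, mul_comm b, mul_div_assoc, div_self hbne, mul_one]
    have hfac : (n.factorial : ℚ) ≠ 0 := by exact_mod_cast n.factorial_ne_zero
    have hfac1 : ((n+1).factorial : ℚ) ≠ 0 := by exact_mod_cast (n+1).factorial_ne_zero
    rw [hb, show -(3*(m:ℚ)+1) + 1 = b + 1 from by rw [hbdef]]
    rw [hB, hg]
    simp only []
    rw [ascPochhammer_succ_eval, Nat.factorial_succ]
    have hz : ((3:ℚ)/2)^(n+1) = (3/2)^n * (3/2) := pow_succ _ _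
    rw [hz]
    have ha' : a + n = -1/3 - m + n := by rw [ha]
    field_simp
    rw [hbdef, ha]
    push_cast
    ring
  rw [Finset.sum_congr rfl hterm, ← Finset.sum_div, Finset.sum_range_sub]
  have hg0 : g 0 = 0 := by simp [hg]
  rw [hg0, sub_zero, hg]
  simp only []
  rw [poch_key, poch_two]
  have hsign : ((-3:ℚ))^(3*m) = (-1)^m * 3^(3*m) := by
    rw [show (-3:ℚ) = (-1)*3 from by norm_num, mul_pow, pow_mul]
    norm_num
  rw [hsign]
  have h32 : ((3:ℚ)/2)^(3*m+1) = 3^(3*m)*3/(2^(3*m)*2) := by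
    rw [div_pow]; ring
  have h2ne : ((2:ℚ))^(3*m) ≠ 0 := by positivity
  have hfne : ((3*m+1).factorial : ℚ) ≠ 0 := by exact_mod_cast Nat.factorial_ne_zero _
  have hcast : (3*(m:ℚ)+1) = ((3*m+1 : ℕ):ℚ) := by push_cast; ring
  have hc : ((3*m+1 : ℕ):ℚ) ≠ 0 := Nat.cast_ne_zero.mpr (by omega)
  rw [h32, pow_succ, hbdef, hcast]
  exact alg_final _ _ _ _ _ _ _ hc hfne h2ne
end

section
/- For every positive integer k, every complex number α with α + k ≠ 0, α ≠ 0, and |k/(α+k)| < 1, the following three-term identity holds at x = k/(α+k): ∑_{n=0}^{k-1} [(α)_n (1-k)_n / ((-k)_n n!)] x^n = [(α)_{k+1} / (k · (k+1)!)] · x^{k+1} · ₂F₁(α+k+1, 2; k+2; x), where ₂F₁(α+k+1, 2; k+2; x) = ∑_{n=0}^∞ (α+k+1)_n (2)_n / ((k+2)_n n!) x^n. -/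
open Filter

lemma aux_two (m : ℕ) : (ascPochhammer ℂ m).eval 2 = ((m+1).factorial : ℂ) := by
  induction m with
  | zero => simp
  | succ m ih =>
    rw [ascPochhammer_succ_eval, ih]
    push_cast [Nat.factorial_succ]
    ring

lemma aux_fact (k m : ℕ) :
    ((k+1).factorial : ℂ) * (ascPochhammer ℂ m).eval ((k:ℂ)+2) = ((k+1+m).factorial : ℂ) := by
  induction m with
  | zero => simp
  | succ m ih =>
    rw [ascPochhammer_succ_eval, ← mul_assoc, ih, show k+1+(m+1) = (k+1+m)+1 by ring,
      Nat.factorial_succ]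
    push_cast
    ring

lemma aux_split (n m : ℕ) (y : ℂ) :
    (ascPochhammer ℂ (n+m)).eval y
      = (ascPochhammer ℂ n).eval y * (ascPochhammer ℂ m).eval (y + n) := by
  rw [← ascPochhammer_mul]
  simp [Polynomial.eval_comp]

lemma aux_neg (k n : ℕ) :
    (ascPochhammer ℂ n).eval (1 - (k:ℂ)) * (-(k:ℂ))
      = ((n:ℂ) - k) * (ascPochhammer ℂ n).eval (-(k:ℂ)) := by
  cases n with
  | zero => simp
  | succ m =>
    rw [ascPochhammer_succ_eval, show m+1 = 1+m by ring, aux_split 1 m (-(k:ℂ))]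
    simp only [ascPochhammer_one, Polynomial.eval_X]
    push_cast
    have : -(k:ℂ) + 1 = 1 - k := by ring
    rw [this]
    ring

lemma aux_ne (k : ℕ) {n : ℕ} (h : n ≤ k) : (ascPochhammer ℂ n).eval (-(k:ℂ)) ≠ 0 := by
  induction n with
  | zero => simp
  | succ m ih =>
    rw [ascPochhammer_succ_eval]
    refine mul_ne_zero (ih (by omega)) ?_
    have : (m:ℂ) ≠ (k:ℂ) := by exact_mod_cast (by omega : m ≠ k)
    intro hc
    apply this
    linear_combination hc

lemma summable_of_ratio_tendsto {f u : ℕ → ℂ} {L : ℝ} (hL : L < 1)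
    (h : ∀ᶠ n in atTop, f (n+1) = f n * u n)
    (hu : Tendsto (fun n => ‖u n‖) atTop (nhds L)) : Summable f := by
  have hr : L < (L+1)/2 := by linarith
  have h2 : ∀ᶠ n in atTop, ‖u n‖ < (L+1)/2 := hu.eventually (gt_mem_nhds hr)
  apply summable_of_ratio_norm_eventually_le (show (L+1)/2 < 1 by linarith)
  filter_upwards [h, h2] with n h1 h2
  rw [h1, norm_mul, mul_comm]
  exact mul_le_mul_of_nonneg_right h2.le (norm_nonneg _)

lemma aux_A (α P X fn nn kk : ℂ) (hα : α ≠ 0) (hkk : kk ≠ 0) (hfn : fn ≠ 0)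
    (hαk : α + kk ≠ 0) :
    P * (nn - kk) * X / (-kk * fn)
      = -(α+kk)/(kk*α) * (P * X / fn) * (α*(nn-kk)*(α+kk)⁻¹) := by
  field_simp

lemma aux_B (α P X x fn nn kk : ℂ) (hα : α ≠ 0) (hkk : kk ≠ 0) (hfn : fn ≠ 0)
    (hn1 : nn + 1 ≠ 0) :
    (-(α+kk)/(kk*α)) * (nn * P * X / fn)
      - (-(α+kk)/(kk*α)) * ((nn+1) * (P*(α+nn)) * (X*x) / ((nn+1)*fn))
      = (-(α+kk)/(kk*α)) * (P * X / fn) * (nn - (α+nn)*x) := by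
  field_simp
  ring

lemma aux_C (α P X x fn nn kk : ℂ) (hkk : kk ≠ 0) (hfn : fn ≠ 0) (hn1 : nn + 1 ≠ 0)
    (hnk : nn - kk ≠ 0) :
    P*(α+nn) * ((nn+1) - kk) * (X*x) / (-kk * ((nn+1)*fn))
      = (P * (nn - kk) * X / (-kk * fn)) * (x * ((α+nn)/(nn+1)) * ((nn+1-kk)/(nn-kk))) := by
  field_simp

lemma aux_D (α P X x fn nn kk : ℂ) (hα : α ≠ 0) (hkk : kk ≠ 0) (hfn : fn ≠ 0)
    (hn0 : nn ≠ 0) (hn1 : nn + 1 ≠ 0) :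
    (-(α+kk)/(kk*α)) * ((nn+1) * (P*(α+nn)) * (X*x) / ((nn+1)*fn))
      = (-(α+kk)/(kk*α)) * (nn * P * X / fn) * (x * ((α+nn)/nn)) := by
  field_simp

lemma aux_E (P Q R X fn nn kk : ℂ) (hR : R ≠ 0) (hkk : kk ≠ 0) (hfn : fn ≠ 0)
    (hrel : Q * (-kk) = (nn - kk) * R) :
    P * Q / (R * fn) * X = P * (nn - kk) * X / (-kk * fn) := by
  rw [div_mul_eq_mul_div, div_eq_div_iff (by simp [hR, hfn]) (by simp [hkk, hfn])]
  linear_combination (P * X * fn) * hrel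

lemma aux_F (A1 Q2 FK Fm KF Xk Xm mm kk : ℂ) (hkk : kk ≠ 0) (hKF : KF ≠ 0) (hFK : FK ≠ 0)
    (hFm : Fm ≠ 0) (hk1 : kk + 1 ≠ 0) :
    -(A1 * Q2 * (kk + 1 + mm - kk) * (Xk * Xm) / (-kk * ((kk+1) * KF * FK)))
      = A1 / (kk * ((kk+1) * KF)) * Xk * (Q2 * ((mm+1) * Fm) / (FK * Fm) * Xm) := by
  field_simp
  ring

/-- The three-term identity at `x = k/(α+k)`: the terminating sum
`∑_{n=0}^{k-1} (α)_n (1-k)_n / ((-k)_n n!) x^n` equals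
`((α)_{k+1} / (k (k+1)!)) x^{k+1} ₂F₁(α+k+1, 2; k+2; x)`. -/
theorem three_term_identity_at_special_point (α : ℂ) (k : ℕ) (hk : 1 ≤ k)
    (hα : α ≠ 0) (hαk : α + k ≠ 0) (hx : ‖(k : ℂ) / (α + k)‖ < 1) :
    ∑ n ∈ Finset.range k,
      ((ascPochhammer ℂ n).eval α * (ascPochhammer ℂ n).eval (1 - (k : ℂ)) /
        ((ascPochhammer ℂ n).eval (-(k : ℂ)) * (n.factorial : ℂ))) * ((k : ℂ) / (α + k)) ^ n
    = ((ascPochhammer ℂ (k + 1)).eval α / ((k : ℂ) * ((k + 1).factorial : ℂ))) *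
        ((k : ℂ) / (α + k)) ^ (k + 1) *
        ∑' n : ℕ, ((ascPochhammer ℂ n).eval (α + (k : ℂ) + 1) * (ascPochhammer ℂ n).eval 2 /
          ((ascPochhammer ℂ n).eval ((k : ℂ) + 2) * (n.factorial : ℂ))) *
          ((k : ℂ) / (α + k)) ^ n := by
  have hk0 : (k:ℂ) ≠ 0 := Nat.cast_ne_zero.mpr (by omega)
  obtain ⟨x, hxdef⟩ : ∃ x : ℂ, x = (k:ℂ)/(α+k) := ⟨_, rfl⟩
  rw [show (k:ℂ)/(α+k) = x from hxdef.symm]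
  have hxv : x * (α + k) = k := by rw [hxdef]; exact div_mul_cancel₀ _ hαk
  have hnorm : ‖x‖ < 1 := by rw [hxdef]; exact hx
  obtain ⟨f, hfdef⟩ : ∃ f : ℕ → ℂ, f = fun n : ℕ =>
      (ascPochhammer ℂ n).eval α * ((n:ℂ) - k) * x^n / (-(k:ℂ) * (n.factorial : ℂ)) := ⟨_, rfl⟩
  obtain ⟨g, hgdef⟩ : ∃ g : ℕ → ℂ, g = fun n : ℕ =>
      (-(α+k)/((k:ℂ)*α)) * ((n:ℂ) * (ascPochhammer ℂ n).eval α * x^n / (n.factorial : ℂ)) :=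
    ⟨_, rfl⟩
  have hfacne : ∀ n : ℕ, ((n.factorial : ℂ)) ≠ 0 :=
    fun n => Nat.cast_ne_zero.mpr n.factorial_ne_zero
  have hkey : ∀ n : ℕ, (n:ℂ) - (α+(n:ℂ))*x = α*((n:ℂ)-(k:ℂ))*(α+(k:ℂ))⁻¹ := by
    intro n
    rw [hxdef]
    field_simp
    ring
  have htel : ∀ n : ℕ, f n = g n - g (n+1) := by
    intro n
    have hn1 : (n:ℂ) + 1 ≠ 0 := Nat.cast_add_one_ne_zero n
    have e1 : g n - g (n+1) = (-(α+k)/((k:ℂ)*α)) *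
        ((ascPochhammer ℂ n).eval α * x^n / (n.factorial : ℂ)) * ((n:ℂ) - (α+(n:ℂ))*x) := by
      simp only [hgdef]
      rw [ascPochhammer_succ_eval, pow_succ]
      push_cast [Nat.factorial_succ]
      linear_combination aux_B α ((ascPochhammer ℂ n).eval α) (x^n) x ((n.factorial : ℂ))
        (n:ℂ) (k:ℂ) hα hk0 (hfacne n) hn1
    rw [e1, hkey n]
    simp only [hfdef]
    linear_combination aux_A α ((ascPochhammer ℂ n).eval α) (x^n) ((n.factorial : ℂ))
      (n:ℂ) (k:ℂ) hα hk0 (hfacne n) hαk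
  -- limits
  have hcast : Tendsto (fun n : ℕ => (n:ℝ)) atTop atTop := tendsto_natCast_atTop_atTop
  have hc0 : Tendsto (fun n : ℕ => ((n:ℂ)+1)⁻¹) atTop (nhds 0) := by
    have hr : Tendsto (fun n : ℕ => (((n:ℝ)+1)⁻¹ : ℝ)) atTop (nhds 0) :=
      tendsto_inv_atTop_zero.comp (tendsto_atTop_add_const_right atTop 1 hcast)
    have := (Complex.continuous_ofReal.tendsto 0).comp hr
    refine this.congr fun n => ?_
    simp only [Function.comp_apply]
    push_cast
    norm_num
  have hc0' : Tendsto (fun n : ℕ => ((n:ℂ)-(k:ℂ))⁻¹) atTop (nhds 0) := by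
    have hr : Tendsto (fun n : ℕ => (((n:ℝ)-(k:ℝ))⁻¹ : ℝ)) atTop (nhds 0) := by
      refine tendsto_inv_atTop_zero.comp ?_
      simpa [sub_eq_add_neg] using tendsto_atTop_add_const_right atTop (-(k:ℝ)) hcast
    have := (Complex.continuous_ofReal.tendsto 0).comp hr
    refine this.congr fun n => ?_
    simp only [Function.comp_apply]
    push_cast
    norm_num
  have hc0'' : Tendsto (fun n : ℕ => ((n:ℂ))⁻¹) atTop (nhds 0) := by
    have hr : Tendsto (fun n : ℕ => (((n:ℝ))⁻¹ : ℝ)) atTop (nhds 0) :=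
      tendsto_inv_atTop_zero.comp hcast
    have := (Complex.continuous_ofReal.tendsto 0).comp hr
    refine this.congr fun n => ?_
    simp only [Function.comp_apply]
    push_cast
    norm_num
  have hc1 : Tendsto (fun n : ℕ => (α+(n:ℂ))/((n:ℂ)+1)) atTop (nhds 1) := by
    have h := tendsto_const_nhds (x := (1:ℂ)) (f := atTop (α := ℕ)) |>.add
      ((tendsto_const_nhds (x := α - 1)).mul hc0)
    rw [show (1:ℂ) + (α-1)*0 = 1 by ring] at h
    refine h.congr fun n => ?_
    have hn1 : (n:ℂ) + 1 ≠ 0 := Nat.cast_add_one_ne_zero n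
    field_simp
    ring
  have hc2 : Tendsto (fun n : ℕ => ((n:ℂ)+1-(k:ℂ))/((n:ℂ)-(k:ℂ))) atTop (nhds 1) := by
    have h := tendsto_const_nhds (x := (1:ℂ)) (f := atTop (α := ℕ)) |>.add hc0'
    rw [show (1:ℂ) + 0 = 1 by ring] at h
    refine h.congr' ?_
    filter_upwards [eventually_ge_atTop (k+1)] with n hn
    have hnk : (n:ℂ) - (k:ℂ) ≠ 0 := by
      rw [sub_ne_zero]
      exact_mod_cast (by omega : n ≠ k)
    field_simp
    ring
  have hcg : Tendsto (fun n : ℕ => (α+(n:ℂ))/(n:ℂ)) atTop (nhds 1) := by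
    have h := tendsto_const_nhds (x := (1:ℂ)) (f := atTop (α := ℕ)) |>.add
      ((tendsto_const_nhds (x := α)).mul hc0'')
    rw [show (1:ℂ) + α*0 = 1 by ring] at h
    refine h.congr' ?_
    filter_upwards [eventually_ge_atTop 1] with n hn
    have hn0 : (n:ℂ) ≠ 0 := Nat.cast_ne_zero.mpr (by omega)
    field_simp
    ring
  -- summability of f
  have hsumf : Summable f := by
    refine summable_of_ratio_tendsto (u := fun n =>
      x * ((α+(n:ℂ))/((n:ℂ)+1)) * (((n:ℂ)+1-(k:ℂ))/((n:ℂ)-(k:ℂ)))) hnorm ?_ ?_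
    · filter_upwards [eventually_ge_atTop (k+1)] with n hn
      simp only [hfdef]
      have hn1 : (n:ℂ) + 1 ≠ 0 := Nat.cast_add_one_ne_zero n
      have hnk : (n:ℂ) - (k:ℂ) ≠ 0 := by
        rw [sub_ne_zero]; exact_mod_cast (by omega : n ≠ k)
      rw [ascPochhammer_succ_eval, pow_succ]
      push_cast [Nat.factorial_succ]
      linear_combination aux_C α ((ascPochhammer ℂ n).eval α) (x^n) x ((n.factorial : ℂ))
        (n:ℂ) (k:ℂ) hk0 (hfacne n) hn1 hnk
    · have h := ((tendsto_const_nhds (x := x) (f := atTop (α := ℕ))).mul hc1).mul hc2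
      rw [show x * 1 * 1 = x by ring] at h
      exact h.norm
  -- summability of g, hence g → 0
  have hsumg : Summable g := by
    refine summable_of_ratio_tendsto (u := fun n => x * ((α+(n:ℂ))/(n:ℂ))) hnorm ?_ ?_
    · filter_upwards [eventually_ge_atTop 1] with n hn
      simp only [hgdef]
      rw [ascPochhammer_succ_eval, pow_succ]
      have hn0 : (n:ℂ) ≠ 0 := Nat.cast_ne_zero.mpr (by omega)
      have hn1 : (n:ℂ) + 1 ≠ 0 := Nat.cast_add_one_ne_zero n
      push_cast [Nat.factorial_succ]
      linear_combination aux_D α ((ascPochhammer ℂ n).eval α) (x^n) x ((n.factorial : ℂ))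
        (n:ℂ) (k:ℂ) hα hk0 (hfacne n) hn0 hn1
    · have h := (tendsto_const_nhds (x := x) (f := atTop (α := ℕ))).mul hcg
      rw [show x * 1 = x by ring] at h
      exact h.norm
  have hg0 : Tendsto g atTop (nhds 0) := hsumg.tendsto_atTop_zero
  -- total sum is zero
  have htsum0 : ∑' n, f n = 0 := by
    have hps : Tendsto (fun N => ∑ n ∈ Finset.range N, f n) atTop (nhds (∑' n, f n)) :=
      hsumf.hasSum.tendsto_sum_nat
    have heq : (fun N => ∑ n ∈ Finset.range N, f n) = fun N => g 0 - g N := by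
      funext N
      rw [show (∑ n ∈ Finset.range N, f n) = ∑ n ∈ Finset.range N, (g n - g (n+1)) from
        Finset.sum_congr rfl fun n _ => htel n, Finset.sum_range_sub']
    rw [heq] at hps
    have hg00 : g 0 = 0 := by simp [hgdef]
    have hlim : Tendsto (fun N => g 0 - g N) atTop (nhds 0) := by
      rw [hg00]
      simpa using (tendsto_const_nhds (x := (0:ℂ))).sub hg0
    exact tendsto_nhds_unique hps hlim
  -- split off head
  have hsplit : (∑ n ∈ Finset.range (k+1), f n) + ∑' m, f (m + (k+1)) = 0 := by
    rw [hsumf.sum_add_tsum_nat_add (k+1), htsum0]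
  have hfk : f k = 0 := by simp [hfdef]
  have hhead : (∑ n ∈ Finset.range k, f n) = - ∑' m, f (m + (k+1)) := by
    rw [Finset.sum_range_succ, hfk, add_zero] at hsplit
    linear_combination hsplit
    -- head coefficients
  have hL : (∑ n ∈ Finset.range k,
      ((ascPochhammer ℂ n).eval α * (ascPochhammer ℂ n).eval (1 - (k : ℂ)) /
        ((ascPochhammer ℂ n).eval (-(k : ℂ)) * (n.factorial : ℂ))) * x ^ n)
      = ∑ n ∈ Finset.range k, f n := by
    refine Finset.sum_congr rfl fun n hn => ?_
    have hnk : n ≤ k := le_of_lt (Finset.mem_range.mp hn)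
    simp only [hfdef]
    exact aux_E ((ascPochhammer ℂ n).eval α) ((ascPochhammer ℂ n).eval (1 - (k:ℂ)))
      ((ascPochhammer ℂ n).eval (-(k:ℂ))) (x^n) ((n.factorial : ℂ)) (n:ℂ) (k:ℂ)
      (aux_ne k hnk) hk0 (hfacne n) (aux_neg k n)
  -- tail terms
  have hterm : ∀ m : ℕ, -(f (m + (k+1)))
      = ((ascPochhammer ℂ (k + 1)).eval α / ((k : ℂ) * ((k + 1).factorial : ℂ)) * x ^ (k + 1)) *
        (((ascPochhammer ℂ m).eval (α + (k : ℂ) + 1) * (ascPochhammer ℂ m).eval 2 /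
          ((ascPochhammer ℂ m).eval ((k : ℂ) + 2) * (m.factorial : ℂ))) * x ^ m) := by
    intro m
    have hFK : (ascPochhammer ℂ m).eval ((k:ℂ) + 2) ≠ 0 := by
      intro h0
      have h1 := aux_fact k m
      rw [h0, mul_zero] at h1
      exact hfacne _ h1.symm
    have hk1 : ((k:ℂ) + 1) ≠ 0 := by
      have := Nat.cast_add_one_ne_zero (R := ℂ) k
      push_cast at this ⊢
      exact this
    simp only [hfdef]
    rw [show m + (k+1) = (k+1)+m from by omega, aux_split (k+1) m α,
      show α + (((k+1):ℕ):ℂ) = α + (k:ℂ) + 1 from by push_cast; ring,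
      aux_two m, ← aux_fact k m, pow_add]
    push_cast [Nat.factorial_succ]
    exact aux_F ((ascPochhammer ℂ (k+1)).eval α) ((ascPochhammer ℂ m).eval (α + (k:ℂ) + 1))
      ((ascPochhammer ℂ m).eval ((k:ℂ) + 2)) ((m.factorial : ℂ)) ((k.factorial : ℂ))
      (x^(k+1)) (x^m) (m:ℂ) (k:ℂ) hk0 (hfacne k) hFK (hfacne m) hk1
  rw [hL, hhead, ← tsum_neg, tsum_congr hterm, tsum_mul_left]
end
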